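/- Let A be an associative ring (not necessarily unital or commutative) and let I ⊆ A be a two-sided ideal such that every element of I can be written as a finite sum of products u·v with u, v ∈ I (i.e. I·I = I). Then for every a ∈ I and every T ∈ A the commutator [a, T] = aT − Ta lies in the additive subgroup of A generated by the commutators [u, v] = uv − vu with u, v ∈ I. -/

import Mathlib

/-- If `I` is a two-sided ideal of an associative (not necessarily unital) ring `A` such that
every element of `I` is a finite sum of products of two elements of `I` (i.e. `I·I = I`), then
for every `a ∈ I` and every `T ∈ A` the commutator `[a,T] = aT − Ta` lies in the additive
subgroup of `A` generated by the commutators `[u,v]` with `u, v ∈ I`. -/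
theorem commutator_with_ideal_mem_ideal_commutators
    {A : Type*} [NonUnitalRing A] (I : TwoSidedIdeal A)
    (hI : ∀ a ∈ I, a ∈ AddSubmonoid.closure {x : A | ∃ u ∈ I, ∃ v ∈ I, x = u * v}) :
    ∀ a ∈ I, ∀ T : A,
      a * T - T * a ∈
        AddSubgroup.closure {x : A | ∃ u ∈ I, ∃ v ∈ I, x = u * v - v * u} := by
  intro a ha T
  have h := hI a ha
  clear ha
  induction h using AddSubmonoid.closure_induction with
  | mem x hx =>
    obtain ⟨u, hu, v, hv, rfl⟩ := hx
    have key : u * v * T - T * (u * v) =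
        (u * (v * T) - (v * T) * u) + (v * (T * u) - (T * u) * v) := by
      noncomm_ring
    rw [key]
    exact add_mem
      (AddSubgroup.subset_closure ⟨u, hu, v * T, I.mul_mem_right v T hv, rfl⟩)
      (AddSubgroup.subset_closure ⟨v, hv, T * u, I.mul_mem_left T u hu, rfl⟩)
  | zero =>
    simpa using (AddSubgroup.closure _).zero_mem
  | add x y _ _ hx hy =>
    have : (x + y) * T - T * (x + y) = (x * T - T * x) + (y * T - T * y) := by noncomm_ring
    rw [this]
    exact add_mem hx hy
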